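/- A Gaussian integer z is a rational integer if and only if there exist Gaussian integers s, t, w, x, y such that, setting v = (2s+1)(3t+1), the equation (4*(2*v*(2*(2z+1)^2+1) - y)^2 - 3*y^2 - 1)^2 + 2*(w^2 - 1 - 3*y^2*(2z+1 - x*y)^2)^2 = 0 holds. -/

import Mathlib

/-- `b^2 = 3*d^2` forces `b = d = 0` (irrationality of √3), by descent. -/
lemma sq_eq_three_sq (b d : ℤ) (h : b^2 = 3*d^2) : b = 0 ∧ d = 0 := by
  have key : ∀ n : ℕ, ∀ b d : ℤ, d.natAbs ≤ n → b^2 = 3*d^2 → b = 0 ∧ d = 0 := by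
    intro n
    induction n with
    | zero =>
      intro b d hd h
      have hd0 : d = 0 := by omega
      subst hd0
      constructor
      · nlinarith
      · rfl
    | succ n ih =>
      intro b d hd h
      rcases eq_or_ne d 0 with rfl | hd0
      · exact ⟨by nlinarith, rfl⟩
      · have h3b : (3:ℤ) ∣ b := by
          have : (3:ℤ) ∣ b^2 := ⟨d^2, h⟩
          exact Int.Prime.dvd_pow' (by norm_num) this
        obtain ⟨b', rfl⟩ := h3b
        have h2 : d^2 = 3*b'^2 := by nlinarith
        have h3d : (3:ℤ) ∣ d := by
          have : (3:ℤ) ∣ d^2 := ⟨b'^2, h2⟩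
          exact Int.Prime.dvd_pow' (by norm_num) this
        obtain ⟨d', rfl⟩ := h3d
        have h4 : b'^2 = 3*d'^2 := by nlinarith
        have hlt : d'.natAbs ≤ n := by
          have : (3*d').natAbs = 3 * d'.natAbs := by
            simpa using Int.natAbs_mul 3 d'
          omega
        obtain ⟨hb', hd'⟩ := ih b' d' hlt h4
        exact ⟨by rw [hb']; ring, by rw [hd']; ring⟩
  exact key d.natAbs b d le_rfl h

/-- key descent: a²+2b²=0 in ℤ[i], coordinates. -/
lemma gauss_sq_two (p q r u : ℤ) (h1 : p^2 - q^2 + 2*r^2 - 2*u^2 = 0)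
    (h2 : p*q + 2*r*u = 0) : p = 0 ∧ q = 0 ∧ r = 0 ∧ u = 0 := by
  have key : ∀ n : ℕ, ∀ p q r u : ℤ,
      p.natAbs + q.natAbs + r.natAbs + u.natAbs ≤ n →
      p^2 - q^2 + 2*r^2 - 2*u^2 = 0 → p*q + 2*r*u = 0 →
      p = 0 ∧ q = 0 ∧ r = 0 ∧ u = 0 := by
    intro n
    induction n with
    | zero => intro p q r u hn _ _; refine ⟨by omega, by omega, by omega, by omega⟩
    | succ n ih =>
      intro p q r u hn h1 h2
      rcases eq_or_ne p 0 with rfl | hp0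
      · -- then q^2 = 2r^2-2u^2... q even etc; handle: q² = 2(r²−u²); also 2ru = -0
        rcases eq_or_ne q 0 with rfl | hq0
        · -- 2r² = 2u², ru = 0
          have hru : r*u = 0 := by linarith
          rcases mul_eq_zero.mp hru with rfl | rfl
          · have : u = 0 := by nlinarith
            exact ⟨rfl, rfl, rfl, this⟩
          · have : r = 0 := by nlinarith
            exact ⟨rfl, rfl, this, rfl⟩
        · -- p = 0, q ≠ 0 : q² = 2r²−2u² even so q even, contradiction path: recurse
          -- q even: q = 2q'
          have hqe : (2:ℤ) ∣ q := by
            have : (2:ℤ) ∣ q^2 := ⟨r^2 - u^2, by linarith⟩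
            exact Int.Prime.dvd_pow' (by norm_num) this
          obtain ⟨q', rfl⟩ := hqe
          have h1' : r^2 - u^2 + 2*0^2 - 2*q'^2 = 0 := by nlinarith
          have h2' : r*u + 2*0*q' = 0 := by linarith
          have hlt : r.natAbs + u.natAbs + (0:ℤ).natAbs + q'.natAbs ≤ n := by
            have : (2*q').natAbs = 2*q'.natAbs := by simpa using Int.natAbs_mul 2 q'
            omega
          obtain ⟨hr, hu, _, hq'⟩ := ih r u 0 q' hlt h1' h2'
          exact ⟨rfl, by rw [hq']; ring, hr, hu⟩
      · -- p ≠ 0. Show p, q both even.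
        have hpq_par : Even p ∧ Even q := by
          rcases Int.even_or_odd p with hp | hp
          · constructor
            · exact hp
            · rcases Int.even_or_odd q with hq | hq
              · exact hq
              · exfalso
                have h1o : Odd (q^2) := hq.pow
                have h2o : Even (p^2) := by rcases hp with ⟨k, rfl⟩; exact ⟨2*k*k, by ring⟩
                have : Odd (p^2 - q^2 + 2*r^2 - 2*u^2) := by
                  have e1 : Even (p^2 - q^2 + 2*r^2) → False := by
                    intro he
                    have : Odd (p^2 - q^2 + 2*r^2) := by
                      have : Odd (p^2 - q^2) := h2o.sub_odd h1o
                      simpa using this.add_even ⟨r^2, by ring⟩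
                    exact (Int.not_odd_iff_even.mpr he) this
                  have : Odd (p^2 - q^2 + 2*r^2) := by
                    have : Odd (p^2 - q^2) := h2o.sub_odd h1o
                    simpa using this.add_even (⟨r^2, by ring⟩ : Even (2*r^2))
                  simpa using this.sub_even (⟨u^2, by ring⟩ : Even (2*u^2))
                rw [h1] at this
                simpa using this
          · exfalso
            rcases Int.even_or_odd q with hq | hq
            · -- p odd q even: h1 odd = 0
              have : Odd (p^2 - q^2 + 2*r^2 - 2*u^2) := by
                have h1o : Odd (p^2) := hp.pow
                have h2o : Even (q^2) := by rcases hq with ⟨k, rfl⟩; exact ⟨2*k*k, by ring⟩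
                have : Odd (p^2 - q^2) := h1o.sub_even h2o
                have : Odd (p^2 - q^2 + 2*r^2) := by
                  simpa using this.add_even (⟨r^2, by ring⟩ : Even (2*r^2))
                simpa using this.sub_even (⟨u^2, by ring⟩ : Even (2*u^2))
              rw [h1] at this
              simpa using this
            · -- both odd: h2: odd + even = 0
              have : Odd (p*q + 2*r*u) := by
                have : Odd (p*q) := hp.mul hq
                simpa using this.add_even (⟨r*u, by ring⟩ : Even (2*r*u))
              rw [h2] at this
              simpa using this
        obtain ⟨⟨p', rfl⟩, ⟨q', rfl⟩⟩ := hpq_par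
        have hp2 : p' + p' = 2*p' := by ring
        have h1' : r^2 - u^2 + 2*p'^2 - 2*q'^2 = 0 := by nlinarith
        have h2' : r*u + 2*p'*q' = 0 := by nlinarith
        have hlt : r.natAbs + u.natAbs + p'.natAbs + q'.natAbs ≤ n := by
          have e1 : (p'+p').natAbs = 2*p'.natAbs := by
            have : p'+p' = 2*p' := by ring
            rw [this]; simpa using Int.natAbs_mul 2 p'
          have e2 : (q'+q').natAbs = 2*q'.natAbs := by
            have : q'+q' = 2*q' := by ring
            rw [this]; simpa using Int.natAbs_mul 2 q'
          have hp'0 : p'.natAbs ≠ 0 := by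
            intro hh
            have : p' = 0 := by omega
            exact hp0 (by rw [this]; ring)
          omega
        obtain ⟨hr, hu, hp', hq'⟩ := ih r u p' q' hlt h1' h2'
        exact ⟨by rw [hp']; ring, by rw [hq']; ring, hr, hu⟩
  exact key _ p q r u le_rfl h1 h2

open Zsqrtd

/-- In ℤ[i], a² + 2b² = 0 implies a = b = 0. -/
lemma gaussian_sq_add_two_sq (a b : GaussianInt) (h : a^2 + 2*b^2 = 0) :
    a = 0 ∧ b = 0 := by
  have h' : a*a + (b*b + b*b) = 0 := by linear_combination h
  have hre := congrArg Zsqrtd.re h'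
  have him := congrArg Zsqrtd.im h'
  simp only [Zsqrtd.re_add, Zsqrtd.im_add, Zsqrtd.re_mul, Zsqrtd.im_mul,
    Zsqrtd.re_zero, Zsqrtd.im_zero] at hre him
  obtain ⟨h1, h2, h3, h4⟩ := gauss_sq_two a.re a.im b.re b.im (by linarith) (by linarith)
  constructor <;> ext <;> simp [h1, h2, h3, h4]
/-- Solutions of X² − 3Y² = 1 in ℤ[i] are real. -/
lemma gaussian_pell_real (X Y : GaussianInt) (h : X^2 - 3*Y^2 = 1) :
    X.im = 0 ∧ Y.im = 0 := by
  have h' : X*X - (Y*Y + Y*Y + Y*Y) = 1 := by linear_combination h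
  have hre := congrArg Zsqrtd.re h'
  have him := congrArg Zsqrtd.im h'
  simp only [Zsqrtd.re_sub, Zsqrtd.im_sub, Zsqrtd.re_add, Zsqrtd.im_add,
    Zsqrtd.re_mul, Zsqrtd.im_mul, Zsqrtd.re_one, Zsqrtd.im_one] at hre him
  set a := X.re; set b := X.im; set c := Y.re; set d := Y.im
  -- hre : a² − b² − 3c² + 3d² = 1 (mod shapes), him : 2ab − 6cd = 0
  have hq : a*d - b*c = 0 := by
    have hid : (a^2 + b^2 - 3*c^2 - 3*d^2)^2 + 12*(a*d - b*c)^2 = 1 := by nlinarith [hre, him]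
    nlinarith [sq_nonneg (a^2 + b^2 - 3*c^2 - 3*d^2), sq_nonneg (a*d - b*c)]
  have hab : a*b - 3*c*d = 0 := by linarith
  -- a(b²−3d²) = 0 and c(b²−3d²) = 0
  have ha : a*(b^2 - 3*d^2) = 0 := by linear_combination b*hab - 3*d*hq
  have hc : c*(b^2 - 3*d^2) = 0 := by linear_combination d*hab - b*hq
  rcases eq_or_ne (b^2 - 3*d^2) 0 with hbd | hbd
  · obtain ⟨hb, hd⟩ := sq_eq_three_sq b d (by linarith)
    exact ⟨hb, hd⟩
  · have ha0 : a = 0 := by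
      rcases mul_eq_zero.mp ha with h | h
      · exact h
      · exact absurd h hbd
    have hc0 : c = 0 := by
      rcases mul_eq_zero.mp hc with h | h
      · exact h
      · exact absurd h hbd
    exfalso
    -- −b² + 3d² = 1 → b² ≡ 2 mod 3, impossible
    have hb2 : 3*d^2 - b^2 = 1 := by
      rw [ha0, hc0] at hre; nlinarith [hre]
    have := congrArg (fun z : ℤ => (z : ZMod 3)) hb2
    push_cast at this
    have h30 : (3 : ZMod 3) = 0 := by decide
    have hb3 : ((b : ZMod 3))^2 = -1 := by linear_combination -this + ((d:ZMod 3)^2)*h30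
    revert hb3
    generalize (b : ZMod 3) = B
    revert B
    decide
/-- Pell solutions for x² − 3y² = 1. -/
def pell3 : ℕ → ℤ × ℤ
  | 0 => (1, 0)
  | n+1 => (2 * (pell3 n).1 + 3 * (pell3 n).2, (pell3 n).1 + 2 * (pell3 n).2)

lemma pell3_succ (n : ℕ) : pell3 (n+1)
    = (2 * (pell3 n).1 + 3 * (pell3 n).2, (pell3 n).1 + 2 * (pell3 n).2) := rfl

lemma pell3_eq (n : ℕ) : (pell3 n).1^2 - 3*(pell3 n).2^2 = 1 := by
  induction n with
  | zero => norm_num [pell3]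
  | succ n ih => rw [pell3_succ]; dsimp only; linear_combination ih

lemma pell3_pos (n : ℕ) : 1 ≤ (pell3 n).1 ∧ (n : ℤ) ≤ (pell3 n).2 ∧ 0 ≤ (pell3 n).2 := by
  induction n with
  | zero => norm_num [pell3]
  | succ n ih => rw [pell3_succ]; dsimp only; push_cast; omega

lemma pell3_add (a b : ℕ) :
    (pell3 (a+b)).1 = (pell3 a).1 * (pell3 b).1 + 3 * (pell3 a).2 * (pell3 b).2 ∧
    (pell3 (a+b)).2 = (pell3 a).1 * (pell3 b).2 + (pell3 a).2 * (pell3 b).1 := by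
  induction b with
  | zero => simp [pell3]
  | succ b ih =>
    have h1 : a + (b+1) = (a+b) + 1 := by omega
    rw [h1, pell3_succ, pell3_succ]
    dsimp only
    constructor
    · rw [ih.1, ih.2]; ring
    · rw [ih.1, ih.2]; ring
lemma pell3_period (M : ℕ) (hM : 0 < M) : ∃ m, 2 ≤ m ∧ (M:ℤ) ∣ (pell3 m).2 := by
  haveI : NeZero M := ⟨by omega⟩
  set f : ℕ → ZMod M × ZMod M := fun n => (((pell3 n).1 : ZMod M), ((pell3 n).2 : ZMod M)) with hf
  have hback : ∀ i j : ℕ, f (i+1) = f (j+1) → f i = f j := by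
    intro i j h
    have h1 : ((pell3 (i+1)).1 : ZMod M) = ((pell3 (j+1)).1 : ZMod M) := congrArg Prod.fst h
    have h2 : ((pell3 (i+1)).2 : ZMod M) = ((pell3 (j+1)).2 : ZMod M) := congrArg Prod.snd h
    rw [pell3_succ, pell3_succ] at h1 h2
    push_cast at h1 h2
    have e1 : ((pell3 i).1 : ZMod M) = ((pell3 j).1 : ZMod M) := by
      linear_combination 2*h1 - 3*h2
    have e2 : ((pell3 i).2 : ZMod M) = ((pell3 j).2 : ZMod M) := by
      linear_combination 2*h2 - h1
    simp only [hf, Prod.mk.injEq]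
    exact ⟨e1, e2⟩
  obtain ⟨A, B, hAB, hfAB⟩ := Finite.exists_ne_map_eq_of_infinite f
  -- wlog A < B
  have main : ∀ a b : ℕ, a < b → f a = f b → ∃ m, 1 ≤ m ∧ f 0 = f m := by
    intro a
    induction a with
    | zero => intro b hb h; exact ⟨b, by omega, h⟩
    | succ a ih =>
      intro b hb h
      obtain ⟨b', rfl⟩ : ∃ b', b = b' + 1 := ⟨b - 1, by omega⟩
      exact ih b' (by omega) (hback a b' h)
  have hm : ∃ m, 1 ≤ m ∧ f 0 = f m := by
    rcases lt_or_gt_of_ne hAB with h | h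
    · exact main A B h hfAB
    · exact main B A h hfAB.symm
  obtain ⟨m, hm1, hm0⟩ := hm
  -- f 0 = (1, 0); so M ∣ pell3 m .2 and take 2m
  have h2 : ((pell3 m).2 : ZMod M) = 0 := by
    have := (congrArg Prod.snd hm0).symm
    simpa [hf, pell3] using this
  have hdvd : (M:ℤ) ∣ (pell3 m).2 := by
    exact_mod_cast (ZMod.intCast_zmod_eq_zero_iff_dvd _ M).mp h2
  refine ⟨m + m, by omega, ?_⟩
  rw [(pell3_add m m).2]
  exact dvd_add (Dvd.dvd.mul_left hdvd _) (Dvd.dvd.mul_right hdvd _)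
lemma pell3_dvd_y (k j : ℕ) : (pell3 k).2 ∣ (pell3 (j*k)).2 := by
  induction j with
  | zero => simp [pell3]
  | succ j ih =>
    have : (j+1)*k = j*k + k := by ring
    rw [this, (pell3_add (j*k) k).2]
    exact dvd_add (Dvd.dvd.mul_left dvd_rfl _) (Dvd.dvd.mul_right ih _)

lemma pell3_x_cong (k j : ℕ) :
    (pell3 k).2^2 ∣ (pell3 (j*k)).1 - (pell3 k).1^j := by
  induction j with
  | zero => simp [pell3]
  | succ j ih =>
    have hj : (j+1)*k = j*k + k := by ring
    rw [hj, (pell3_add (j*k) k).1]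
    obtain ⟨A, hA⟩ := ih
    obtain ⟨C, hC⟩ := pell3_dvd_y k j
    have : (pell3 (j*k)).1 * (pell3 k).1 + 3*(pell3 (j*k)).2*(pell3 k).2
        - (pell3 k).1^(j+1) = (pell3 k).2^2 * (A * (pell3 k).1 + 3*C) := by
      have e1 : (pell3 (j*k)).1 = (pell3 k).1^j + (pell3 k).2^2 * A := by linarith
      rw [e1, hC]; ring
    exact ⟨_, this⟩

lemma pell3_y_cong (k j : ℕ) :
    (pell3 k).2^3 ∣ (pell3 ((j+1)*k)).2 - ((j:ℤ)+1) * (pell3 k).1^j * (pell3 k).2 := by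
  induction j with
  | zero => simp
  | succ j ih =>
    have hj : (j+2)*k = (j+1)*k + k := by ring
    have hj1 : (j+1+1)*k = (j+1)*k + k := by ring
    rw [hj1, (pell3_add ((j+1)*k) k).2]
    obtain ⟨A, hA⟩ := pell3_x_cong k (j+1)
    obtain ⟨B, hB⟩ := ih
    have e1 : (pell3 ((j+1)*k)).1 = (pell3 k).1^(j+1) + (pell3 k).2^2 * A := by linarith
    have e2 : (pell3 ((j+1)*k)).2
        = ((j:ℤ)+1) * (pell3 k).1^j * (pell3 k).2 + (pell3 k).2^3 * B := by linarith
    refine ⟨A * (pell3 k).2^0 + B * (pell3 k).1, ?_⟩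
    rw [e1, e2]
    push_cast
    ring

/-- the main congruence: for odd j, y_{jk} ≡ j y_k  mod y_k³. -/
lemma pell3_y_odd_cong (k j : ℕ) (hj : Odd j) :
    ∃ T, (pell3 (j*k)).2 = (j:ℤ) * (pell3 k).2 + (pell3 k).2^3 * T := by
  obtain ⟨e, rfl⟩ := hj
  -- (1+a)^e = 1 + a*c
  have pow_aux : ∀ (a : ℤ) (n : ℕ), ∃ c, (1+a)^n = 1 + a*c := by
    intro a n
    induction n with
    | zero => exact ⟨0, by ring⟩
    | succ n ih =>
      obtain ⟨c, hc⟩ := ih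
      exact ⟨c + 1 + a*c, by rw [pow_succ, hc]; ring⟩
  obtain ⟨B, hB⟩ := pell3_y_cong k (2*e)
  -- X_k^{2e} = (X_k²)^e = (1+3Y²)^e = 1 + 3Y²c
  obtain ⟨c, hc⟩ := pow_aux (3*(pell3 k).2^2) e
  have hX2 : (pell3 k).1^(2*e) = 1 + 3*(pell3 k).2^2*c := by
    have h1 : (pell3 k).1^(2*e) = ((pell3 k).1^2)^e := by rw [← pow_mul]
    have h2 : (pell3 k).1^2 = 1 + 3*(pell3 k).2^2 := by linear_combination pell3_eq k
    rw [h1, h2]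
    rw [show (1 + 3*(pell3 k).2^2) = (1 + 3*(pell3 k).2^2) from rfl] at hc ⊢
    linear_combination hc
  refine ⟨B + ((2*(e:ℤ))+1) * 3 * c, ?_⟩
  have := hB
  rw [hX2] at this
  push_cast at this ⊢
  linarith [this]
lemma two_pow_mod_three (a : ℕ) : (3:ℤ) ∣ 2^a - 1 ∨ (3:ℤ) ∣ 2^a + 1 := by
  induction a with
  | zero => left; norm_num
  | succ a ih =>
    rcases ih with ⟨c, hc⟩ | ⟨c, hc⟩
    · right; exact ⟨2*c + 1, by rw [pow_succ]; linarith⟩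
    · left; exact ⟨2*c - 1, by rw [pow_succ]; linarith⟩

/-- Every nonzero integer is of the form (2s+1)(3t+1). -/
lemma int_rep (v : ℤ) (hv : v ≠ 0) : ∃ s t : ℤ, v = (2*s+1)*(3*t+1) := by
  obtain ⟨a, u, hu, huv⟩ := Nat.exists_eq_two_pow_mul_odd (n := v.natAbs) (by omega)
  have hv2 : v = 2^a * u ∨ v = -(2^a * u) := by
    rcases Int.natAbs_eq v with h | h
    · left; rw [h, huv]; push_cast; ring
    · right; rw [h, huv]; push_cast; ring
  obtain ⟨e, he⟩ := hu
  have hodd : ∀ w : ℤ, Odd w → ∃ s : ℤ, w = 2*s+1 := fun w ⟨s, hs⟩ => ⟨s, by omega⟩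
  rcases two_pow_mod_three a with ⟨t, ht⟩ | ⟨t, ht⟩
  · have h2a : (2:ℤ)^a = 3*t+1 := by linarith
    rcases hv2 with h | h
    · obtain ⟨s, hs⟩ := hodd (u:ℤ) ⟨e, by push_cast [he]; ring⟩
      exact ⟨s, t, by linear_combination h + (u:ℤ)*h2a + (3*t+1)*hs⟩
    · obtain ⟨s, hs⟩ := hodd (-(u:ℤ)) ⟨-e-1, by push_cast [he]; ring⟩
      exact ⟨s, t, by linear_combination h - (u:ℤ)*h2a + (3*t+1)*hs⟩
  · have h2a : -(2:ℤ)^a = 3*(-t)+1 := by linarith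
    rcases hv2 with h | h
    · obtain ⟨s, hs⟩ := hodd (-(u:ℤ)) ⟨-e-1, by push_cast [he]; ring⟩
      exact ⟨s, -t, by linear_combination h - (u:ℤ)*h2a + (3*(-t)+1)*hs⟩
    · obtain ⟨s, hs⟩ := hodd (u:ℤ) ⟨e, by push_cast [he]; ring⟩
      exact ⟨s, -t, by linear_combination h + (u:ℤ)*h2a + (3*(-t)+1)*hs⟩
/-- The ℤ-level existence statement. -/
lemma int_main (n : ℤ) : ∃ s t w x y : ℤ,
    4*(2*((2*s+1)*(3*t+1))*(2*(2*n+1)^2+1) - y)^2 - 3*y^2 - 1 = 0 ∧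
    w^2 - 1 - 3*y^2*(2*n+1 - x*y)^2 = 0 := by
  set ξ : ℤ := 2*n+1 with hξ
  set U : ℤ := 2*ξ^2+1 with hU
  have hUpos : 0 < U := by positivity
  have hM : (0:ℤ) < 4*U := by linarith
  obtain ⟨m, hm2, hdvd⟩ := pell3_period (4*U).toNat (by omega)
  rw [Int.toNat_of_nonneg (by linarith)] at hdvd
  obtain ⟨k, hmk⟩ : ∃ k, m = k + 1 := ⟨m - 1, by omega⟩
  have hk1 : 1 ≤ k := by omega
  set X : ℤ := (pell3 k).1 with hX
  set y : ℤ := (pell3 k).2 with hy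
  have hsucc : (pell3 (k+1)).2 = X + 2*y := by rw [pell3_succ]
  rw [hmk, hsucc] at hdvd
  obtain ⟨v, hv⟩ := hdvd
  have hXpos : 1 ≤ X := (pell3_pos k).1
  have hypos : 1 ≤ y := le_trans (by exact_mod_cast hk1) (pell3_pos k).2.1
  have hvne : v ≠ 0 := by
    intro h
    rw [h, mul_zero] at hv
    linarith
  obtain ⟨s, t, hst⟩ := int_rep v hvne
  -- second equation data
  set L : ℤ := (ξ.natAbs : ℤ) + 1 with hL
  have hL0 : (0:ℤ) ≤ (ξ.natAbs : ℤ) := Int.natCast_nonneg _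
  have hLξ : ξ ≤ L - 1 ∧ -ξ ≤ L - 1 := by
    constructor
    · simp only [hL, add_sub_cancel_right]; exact Int.le_natAbs
    · simp only [hL, add_sub_cancel_right]
      rw [← Int.natAbs_neg]; exact Int.le_natAbs
  set j : ℤ := ξ + 2*y^2*L with hj
  have hL1 : (1:ℤ) ≤ L := by rw [hL]; linarith
  have hyy : (1:ℤ) ≤ y^2 := by nlinarith
  have h2L : 2*L ≤ 2*y^2*L := by nlinarith
  have hjpos : 0 < j := by
    have := hLξ.2
    rw [hj]; linarith
  have hjtn : ((j.toNat : ℤ)) = j := Int.toNat_of_nonneg (by linarith)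
  have hjodd : Odd j.toNat := by
    have : Odd ((j.toNat : ℤ)) := by
      rw [hjtn, hj, hξ]
      exact ⟨n + y^2*L, by ring⟩
    exact Int.odd_coe_nat _ |>.mp this
  obtain ⟨T, hT⟩ := pell3_y_odd_cong k j.toNat hjodd
  rw [hjtn] at hT
  refine ⟨s, t, (pell3 (j.toNat*k)).1, -(y*(2*L + T)), y, ?_, ?_⟩
  · rw [← hst]
    have hpk := pell3_eq k
    rw [← hX, ← hy] at hpk
    linear_combination hpk - (4*v*U - 2*y + X)*hv
  · have key : y*(ξ - (-(y*(2*L + T)))*y) = (pell3 (j.toNat*k)).2 := by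
      linear_combination -hT - y*hj
    have hpe := pell3_eq (j.toNat*k)
    linear_combination hpe - 3*((pell3 (j.toNat*k)).2 + y*(ξ - (-(y*(2*L + T)))*y))*key

lemma sq_add_sq_zero (a b : ℤ) (h : a^2 + b^2 = 0) : a = 0 ∧ b = 0 :=
  ⟨by nlinarith [sq_nonneg a, sq_nonneg b], by nlinarith [sq_nonneg a, sq_nonneg b]⟩

lemma one_le_sq (a : ℤ) (h : a ≠ 0) : 1 ≤ a^2 := by
  have := Int.one_le_abs h
  nlinarith [sq_abs a]

/-- The final integer-level contradiction. -/
lemma final_step (zr zi Y Er c x2 vr vi Ur Ui : ℤ)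
    (hEre : Er^2 = 1 + 3*Y^2) (h4c : Er = 4*c - 2*Y)
    (hK : Y*(2*zi - x2*Y) = 0)
    (hUr : Ur = 2*(2*zr+1)^2 - 2*(2*zi)^2 + 1) (hUi : Ui = 4*(2*zr+1)*(2*zi))
    (hnorm : c^2 = (vr^2+vi^2)*(Ur^2+Ui^2)) (hv1 : 1 ≤ vr^2+vi^2) : zi = 0 := by
  rcases mul_eq_zero.mp hK with hY0 | hxY
  · -- Y = 0 : impossible
    exfalso
    rw [hY0] at hEre h4c
    rcases eq_or_ne c 0 with hc0 | hc0
    · rw [hc0] at h4c; rw [h4c] at hEre; norm_num at hEre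
    · have h1 := one_le_sq c hc0
      have h2 : Er^2 = 16*c^2 := by rw [h4c]; ring
      linarith [hEre, h2, h1]
  · have hYne : Y ≠ 0 := by
      intro h0
      rw [h0] at hEre h4c
      rcases eq_or_ne c 0 with hc0 | hc0
      · rw [hc0] at h4c; rw [h4c] at hEre; norm_num at hEre
      · have h1 := one_le_sq c hc0
        have h2 : Er^2 = 16*c^2 := by rw [h4c]; ring
        linarith [hEre, h2, h1]
    have hY1 : 1 ≤ Y^2 := one_le_sq Y hYne
    by_contra hzi
    have hh1 : 1 ≤ (2*zi)^2 := by
      have : 2*zi ≠ 0 := by omega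
      exact by nlinarith [one_le_sq (2*zi) this]
    have hhY : Y^2 ≤ (2*zi)^2 := by
      have hx0 : x2 ≠ 0 := by
        intro hcon
        rw [hcon] at hxY
        simp at hxY
        omega
      have hx1 := one_le_sq x2 hx0
      have h2 : (2*zi)^2 = x2^2*Y^2 := by
        have : 2*zi = x2*Y := by linarith
        rw [this]; ring
      nlinarith [h2, hx1, hY1, mul_nonneg (sub_nonneg.mpr hx1) (sq_nonneg Y)]
    have hg1 : 1 ≤ (2*zr+1)^2 := one_le_sq (2*zr+1) (by omega)
    have hcge : Ur^2 + Ui^2 ≤ c^2 := by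
      nlinarith [hnorm, hv1, sq_nonneg Ur, sq_nonneg Ui]
    have hUge : 16*(2*zi)^2 ≤ Ur^2 + Ui^2 := by
      rw [hUr, hUi]
      nlinarith [sq_nonneg (2*(2*zr+1)^2 - 2*(2*zi)^2 + 1), hg1, hh1,
        mul_nonneg (sub_nonneg.mpr hg1) (sq_nonneg (2*zi))]
    have hcle : c^2 ≤ Y^2 := by
      have e16 : 16*c^2 = (Er + 2*Y)^2 := by rw [h4c]; ring
      nlinarith [hEre, hY1, sq_nonneg (Er - 2*Y), e16]
    linarith

theorem stmt_18 (z : GaussianInt) :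
    z.im = 0 ↔ ∃ s t w x y : GaussianInt,
      (4*(2*((2*s+1)*(3*t+1))*(2*(2*z+1)^2+1) - y)^2 - 3*y^2 - 1)^2
        + 2*(w^2 - 1 - 3*y^2*(2*z+1 - x*y)^2)^2 = 0 := by
  constructor
  · -- existence
    intro hz
    have hzn : z = ((z.re : ℤ) : GaussianInt) := by
      ext
      · simp
      · simp [hz]
    obtain ⟨s, t, w, x, y, hA, hB⟩ := int_main z.re
    refine ⟨(s:GaussianInt), t, w, x, y, ?_⟩
    have hZ : (4*(2*((2*s+1)*(3*t+1))*(2*(2*z.re+1)^2+1) - y)^2 - 3*y^2 - 1)^2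
        + 2*(w^2 - 1 - 3*y^2*(2*z.re+1 - x*y)^2)^2 = 0 := by
      rw [hA, hB]; ring
    rw [hzn]
    exact_mod_cast hZ
  · rintro ⟨s, t, w, x, y, heq⟩
    obtain ⟨hA, hB⟩ := gaussian_sq_add_two_sq _ _ heq
    clear heq
    set v : GaussianInt := (2*s+1)*(3*t+1) with hvdef
    set U : GaussianInt := 2*(2*z+1)^2+1 with hUdef
    set E : GaussianInt := 2*(2*v*U - y) with hEdef
    clear_value v U E
    have hPA : E^2 - 3*y^2 = 1 := by rw [hEdef]; linear_combination hA
    obtain ⟨hEim, hyim⟩ := gaussian_pell_real E y hPA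
    have hPB : w^2 - 3*(y*(2*z+1 - x*y))^2 = 1 := by linear_combination hB
    obtain ⟨-, hKim⟩ := gaussian_pell_real w _ hPB
    clear hA hB hPB
    -- (1) E = 4vU - 2y componentwise
    have hE2 : E = v*U + v*U + v*U + v*U - y - y := by rw [hEdef]; ring
    have hE2re := congrArg Zsqrtd.re hE2
    have hE2im := congrArg Zsqrtd.im hE2
    simp only [Zsqrtd.re_add, Zsqrtd.im_add, Zsqrtd.re_sub, Zsqrtd.im_sub] at hE2re hE2im
    have hvUim : (v*U).im = 0 := by rw [hEim, hyim] at hE2im; linarith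
    have h4c : E.re = 4*(v*U).re - 2*y.re := by rw [hE2re]; ring
    -- (2) real Pell equation from A
    have hPA' : E*E = 1 + (y*y + y*y + y*y) := by linear_combination hPA
    have hPAre := congrArg Zsqrtd.re hPA'
    simp only [Zsqrtd.re_mul, Zsqrtd.re_add, Zsqrtd.re_one, hEim, hyim] at hPAre
    have hEre : E.re^2 = 1 + 3*y.re^2 := by linear_combination hPAre
    -- (3) kernel equation from B
    have hKeq : y*(z+z+1 - x*y) = y*(2*z+1 - x*y) := by ring
    have hKim2 : (y*(z+z+1 - x*y)).im = 0 := by rw [hKeq]; exact hKim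
    simp only [Zsqrtd.im_mul, Zsqrtd.re_mul, Zsqrtd.im_add, Zsqrtd.re_add,
      Zsqrtd.im_sub, Zsqrtd.re_sub, Zsqrtd.im_one, Zsqrtd.re_one, hyim] at hKim2
    have hK : y.re*(2*z.im - x.im*y.re) = 0 := by linear_combination hKim2
    -- (4) U components
    have hU2 : U = (z+z+1)*(z+z+1) + (z+z+1)*(z+z+1) + 1 := by rw [hUdef]; ring
    have hUre := congrArg Zsqrtd.re hU2
    have hUim := congrArg Zsqrtd.im hU2
    simp only [Zsqrtd.re_mul, Zsqrtd.im_mul, Zsqrtd.re_add, Zsqrtd.im_add,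
      Zsqrtd.re_one, Zsqrtd.im_one] at hUre hUim
    have hUr : U.re = 2*(2*z.re+1)^2 - 2*(2*z.im)^2 + 1 := by rw [hUre]; ring
    have hUi : U.im = 4*(2*z.re+1)*(2*z.im) := by rw [hUim]; ring
    -- (5) norm multiplicativity
    have hmulre : (v*U).re = v.re*U.re + (-1)*v.im*U.im := Zsqrtd.re_mul v U
    have hmulim : (v*U).im = v.re*U.im + v.im*U.re := Zsqrtd.im_mul v U
    rw [hvUim] at hmulim
    have hnorm : ((v*U).re)^2 = (v.re^2 + v.im^2)*(U.re^2 + U.im^2) := by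
      rw [hmulre]
      linear_combination (v.re*U.im + v.im*U.re)*hmulim
    -- (6) v ≠ 0
    have hvne : ¬(v.re = 0 ∧ v.im = 0) := by
      rintro ⟨hvr, hvi⟩
      have hv0 : v = 0 := by
        apply Zsqrtd.ext <;> simp [hvr, hvi]
      rw [hvdef] at hv0
      rcases mul_eq_zero.mp hv0 with h1 | h1
      · have h2 : (s+s+1 : GaussianInt) = 0 := by linear_combination h1
        have h3 := congrArg Zsqrtd.re h2
        simp only [Zsqrtd.re_add, Zsqrtd.re_one, Zsqrtd.re_zero] at h3
        omega
      · have h2 : (t+t+t+1 : GaussianInt) = 0 := by linear_combination h1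
        have h3 := congrArg Zsqrtd.re h2
        simp only [Zsqrtd.re_add, Zsqrtd.re_one, Zsqrtd.re_zero] at h3
        omega
    have hv1 : 1 ≤ v.re^2 + v.im^2 := by
      rcases eq_or_ne v.re 0 with h' | h'
      · rcases eq_or_ne v.im 0 with h'' | h''
        · exact absurd ⟨h', h''⟩ hvne
        · have := one_le_sq v.im h''
          nlinarith [sq_nonneg v.re]
      · have := one_le_sq v.re h'
        nlinarith [sq_nonneg v.im]
    exact final_step z.re z.im y.re E.re (v*U).re x.im v.re v.im U.re U.im
      hEre h4c hK hUr hUi hnorm hv1
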